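/- arXiv:2406.19986 — 4 statements merged into one kernel-verified Lean document; each statement's English description precedes it below -/
import Mathlib

section
/- Let F : ℝ → [0,1] be a cumulative distribution function and let Y be an absolutely continuous real-valued random variable. Then F(Y) is uniformly distributed on (0,1) if and only if Y has CDF F. -/
open MeasureTheory Filter Set

lemma restrict_Ioo01_Iic (t : ℝ) :
    (volume.restrict (Ioo (0:ℝ) 1)) (Iic t) = ENNReal.ofReal (min t 1) := by
  rw [Measure.restrict_apply measurableSet_Iic]
  rcases le_or_gt 1 t with h | h
  · rw [show Iic t ∩ Ioo (0:ℝ) 1 = Ioo 0 1 from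
      inter_eq_right.mpr (fun x hx => le_trans (le_of_lt hx.2) h), Real.volume_Ioo,
      min_eq_right h]
    norm_num
  · have he : Iic t ∩ Ioo (0:ℝ) 1 = Ioc 0 t := by
      ext x
      simp only [mem_inter_iff, mem_Iic, mem_Ioo, mem_Ioc]
      constructor
      · rintro ⟨h1, h2, _⟩; exact ⟨h2, h1⟩
      · rintro ⟨h1, h2⟩; exact ⟨h2, h1, lt_of_le_of_lt h2 h⟩
    rw [he, Real.volume_Ioc, min_eq_left h.le, sub_zero]

/-- Let `F : ℝ → [0,1]` be a CDF and `Y` an absolutely continuous real random variable.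
Then `F(Y)` is uniform on `(0,1)` iff `Y` has CDF `F`. -/
theorem pit_uniform_iff_cdf
    {Ω : Type*} [MeasurableSpace Ω] (μ : Measure Ω) [IsProbabilityMeasure μ]
    (Y : Ω → ℝ) (hY : Measurable Y) (habs : μ.map Y ≪ (volume : Measure ℝ))
    (F : ℝ → ℝ) (hmono : Monotone F)
    (hrc : ∀ x, ContinuousWithinAt F (Ici x) x)
    (hbot : Tendsto F atBot (nhds 0)) (htop : Tendsto F atTop (nhds 1))
    (hrange : ∀ x, F x ∈ Icc (0:ℝ) 1) :
    μ.map (fun ω => F (Y ω)) = volume.restrict (Ioo (0:ℝ) 1)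
      ↔ ∀ y, μ.map Y (Iic y) = ENNReal.ofReal (F y) := by
  have hF : Measurable F := hmono.measurable
  have hFY : Measurable (fun ω => F (Y ω)) := hF.comp hY
  have hatom : ∀ a : ℝ, μ.map Y {a} = 0 := fun a => habs (Real.volume_singleton)
  have hmapIic : ∀ t, μ.map (fun ω => F (Y ω)) (Iic t) = μ.map Y {x | F x ≤ t} := by
    intro t
    rw [Measure.map_apply hFY measurableSet_Iic,
      show {x : ℝ | F x ≤ t} = F ⁻¹' Iic t from rfl,
      Measure.map_apply hY (hF measurableSet_Iic)]
    rfl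
  haveI : IsProbabilityMeasure (μ.map Y) := Measure.isProbabilityMeasure_map hY.aemeasurable
  constructor
  · -- F(Y) uniform → CDF is F
    intro h y
    have hFy1 : F y ≤ 1 := (hrange y).2
    have key1 : μ {ω | F (Y ω) ≤ F y} = ENNReal.ofReal (F y) := by
      have h' := congrArg (fun m : Measure ℝ => m (Iic (F y))) h
      simp only [restrict_Ioo01_Iic, min_eq_left hFy1] at h'
      rw [← h', Measure.map_apply hFY measurableSet_Iic]
      rfl
    have key2 : μ {ω | F (Y ω) = F y} = 0 := by
      have h2 : μ.map (fun ω => F (Y ω)) {F y} = 0 := by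
        rw [h, Measure.restrict_apply (measurableSet_singleton _)]
        exact le_antisymm (le_trans (measure_mono inter_subset_left)
          (le_of_eq Real.volume_singleton)) zero_le
      rw [Measure.map_apply hFY (measurableSet_singleton _)] at h2
      exact h2
    have hsub1 : {ω | Y ω ≤ y} ⊆ {ω | F (Y ω) ≤ F y} := fun ω hω => hmono hω
    have hsub2 : {ω | F (Y ω) ≤ F y} ⊆ {ω | Y ω ≤ y} ∪ {ω | F (Y ω) = F y} := by
      intro ω hω
      rcases le_or_gt (Y ω) y with h' | h'
      · exact Or.inl h'
      · exact Or.inr (le_antisymm hω (hmono h'.le))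
    have hle : μ {ω | F (Y ω) ≤ F y} ≤ μ {ω | Y ω ≤ y} :=
      le_trans (measure_mono hsub2) (le_trans (measure_union_le _ _) (by rw [key2, add_zero]))
    have heq : μ {ω | Y ω ≤ y} = ENNReal.ofReal (F y) :=
      le_antisymm (key1 ▸ measure_mono hsub1) (key1 ▸ hle)
    rw [Measure.map_apply hY measurableSet_Iic]
    exact heq
  · -- CDF is F → F(Y) uniform
    intro h
    haveI : IsFiniteMeasure (volume.restrict (Ioo (0:ℝ) 1)) := by
      constructor
      rw [Measure.restrict_apply_univ, Real.volume_Ioo]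
      exact ENNReal.ofReal_lt_top
    refine Measure.ext_of_Iic _ _ (fun t => ?_)
    rw [hmapIic t, restrict_Ioo01_Iic t]
    rcases le_or_gt 1 t with h1 | h1
    · have hu : {x : ℝ | F x ≤ t} = univ := eq_univ_of_forall (fun x => le_trans (hrange x).2 h1)
      rw [hu, measure_univ, min_eq_right h1]
      norm_num
    rcases lt_or_ge t 0 with h0 | h0
    · have he : {x : ℝ | F x ≤ t} = ∅ := by
        ext x; simp only [mem_setOf_eq, mem_empty_iff_false, iff_false, not_le]
        exact lt_of_lt_of_le h0 (hrange x).1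
      rw [he, measure_empty, min_eq_left h1.le, eq_comm, ENNReal.ofReal_eq_zero]
      exact h0.le
    -- 0 ≤ t < 1
    rw [min_eq_left h1.le]
    rcases eq_empty_or_nonempty {x : ℝ | F x ≤ t} with hemp | hne
    · rw [hemp, measure_empty, eq_comm, ENNReal.ofReal_eq_zero]
      by_contra hc
      push_neg at hc
      obtain ⟨x, hx⟩ := (hbot.eventually (eventually_lt_nhds hc)).exists
      exact absurd (show x ∈ {x : ℝ | F x ≤ t} from hx.le) (by rw [hemp]; exact notMem_empty x)
    · set A := {x : ℝ | F x ≤ t} with hA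
      obtain ⟨x0, hx0⟩ := (htop.eventually (eventually_gt_nhds h1)).exists
      have hbd : BddAbove A := by
        refine ⟨x0, fun x hx => ?_⟩
        by_contra hc
        push_neg at hc
        exact absurd hx
          (by simp only [hA, mem_setOf_eq, not_le]; exact lt_of_lt_of_le hx0 (hmono hc.le))
      set a := sSup A with ha
      have hlower : Iio a ⊆ A := by
        intro x hx
        obtain ⟨z, hz, hxz⟩ := exists_lt_of_lt_csSup hne hx
        exact le_trans (hmono hxz.le) hz
      have hupper : A ⊆ Iic a := fun x hx => le_csSup hbd hx
      have hIicIio : μ.map Y (Iic a) = μ.map Y (Iio a) := by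
        rw [← Iio_union_right]
        exact le_antisymm (le_trans (measure_union_le _ _) (by rw [hatom a, add_zero]))
          (measure_mono subset_union_left)
      -- μ.map Y (Iio a) ≤ ofReal t
      have hIio_le : μ.map Y (Iio a) ≤ ENNReal.ofReal t := by
        have hU : Iio a = ⋃ n : ℕ, Iic (a - ((n : ℝ) + 1)⁻¹) := by
          ext x
          simp only [mem_Iio, mem_iUnion, mem_Iic]
          constructor
          · intro hx
            obtain ⟨n, hn⟩ := exists_nat_one_div_lt (sub_pos.2 hx)
            rw [one_div] at hn
            exact ⟨n, by linarith⟩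
          · rintro ⟨n, hn⟩
            have hpos : (0 : ℝ) < ((n : ℝ) + 1)⁻¹ := by positivity
            linarith
        have hmonoS : Monotone (fun n : ℕ => Iic (a - ((n : ℝ) + 1)⁻¹)) := by
          intro n m hnm
          apply Iic_subset_Iic.2
          have : ((m : ℝ) + 1)⁻¹ ≤ ((n : ℝ) + 1)⁻¹ := by
            apply inv_anti₀ (by positivity)
            exact_mod_cast add_le_add_left (Nat.cast_le.2 hnm) 1
          linarith
        rw [hU, Directed.measure_iUnion hmonoS.directed_le]
        refine iSup_le (fun n => ?_)
        rw [h]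
        refine ENNReal.ofReal_le_ofReal ?_
        refine hlower ?_
        have hpos : (0 : ℝ) < ((n : ℝ) + 1)⁻¹ := by positivity
        exact sub_lt_self a hpos
      -- t ≤ F a
      have htFa : t ≤ F a := by
        have htend : Tendsto F (nhdsWithin a (Ioi a)) (nhds (F a)) :=
          (hrc a).mono Ioi_subset_Ici_self
        refine ge_of_tendsto htend ?_
        filter_upwards [self_mem_nhdsWithin] with x hx
        by_contra hc
        push_neg at hc
        exact absurd (hupper hc.le) (show ¬ x ≤ a from not_le.2 hx)
      have hIic_eq : μ.map Y (Iic a) = ENNReal.ofReal (F a) := h a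
      have h1' : μ.map Y A ≤ ENNReal.ofReal t :=
        le_trans (le_trans (measure_mono hupper) (le_of_eq hIicIio)) hIio_le
      have h2' : ENNReal.ofReal t ≤ μ.map Y A :=
        le_trans (ENNReal.ofReal_le_ofReal htFa)
          (le_trans (le_of_eq hIic_eq.symm) (le_trans (le_of_eq hIicIio) (measure_mono hlower)))
      exact le_antisymm h1' h2'
end

section
/- Let D be a {0,1}-valued random variable and H a random vector, and let π(H) := E[D | H] be the propensity score. Then D is conditionally independent of H given π(H). -/
open MeasureTheory ProbabilityTheory

private lemma indicator_one_abs_le {α : Type*} (s : Set α) (x : α) :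
    |Set.indicator s (fun _ => (1:ℝ)) x| ≤ 1 := by
  by_cases hx : x ∈ s <;> simp [Set.indicator_apply, hx]


/-- Balancing property of the propensity score: if `D` is `{0,1}`-valued and
`π = E[D | σ(H)]`, then `D ⫫ H | σ(π)`. -/
theorem propensity_balancing
    {Ω 𝓗 : Type*} {mΩ : MeasurableSpace Ω} [StandardBorelSpace Ω]
    [MeasurableSpace 𝓗]
    (μ : Measure Ω) [IsProbabilityMeasure μ]
    (D : Ω → ℝ) (hD : Measurable D) (hDval : ∀ ω, D ω = 0 ∨ D ω = 1)
    (H : Ω → 𝓗) (hH : Measurable H)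
    (π : Ω → ℝ) (hπ : π =ᵐ[μ] μ[D | MeasurableSpace.comap H inferInstance])
    (hπmeas : Measurable π) :
    CondIndepFun (MeasurableSpace.comap π inferInstance) hπmeas.comap_le D H μ := by
  classical
  have hmπ_le : (MeasurableSpace.comap π inferInstance) ≤ mΩ := hπmeas.comap_le
  have hmH_le : (MeasurableSpace.comap H inferInstance) ≤ mΩ := hH.comap_le
  set π' : Ω → ℝ := μ[D | (MeasurableSpace.comap H inferInstance)] with hπ'def
  -- basic bounds and integrability
  have hDbd : ∀ ω, |D ω| ≤ 1 := by
    intro ω; rcases hDval ω with h | h <;> simp [h]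
  have hDint : Integrable D μ :=
    (integrable_const (1:ℝ)).mono' hD.aestronglyMeasurable
      (ae_of_all _ fun ω => by simpa [Real.norm_eq_abs] using hDbd ω)
  have hπ'int : Integrable π' μ := integrable_condExp
  have hπint : Integrable π μ := hπ'int.congr hπ.symm
  have hπsm : StronglyMeasurable[(MeasurableSpace.comap π inferInstance)] π :=
    (measurable_iff_comap_le.mpr le_rfl).stronglyMeasurable
  have hπ'sm : StronglyMeasurable[(MeasurableSpace.comap H inferInstance)] π' := stronglyMeasurable_condExp
  -- the indicator functions of H-preimages
  set X : Set 𝓗 → Ω → ℝ := fun t => (H ⁻¹' t).indicator (fun _ => (1:ℝ)) with hXdef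
  have hXmeas : ∀ t : Set 𝓗, MeasurableSet t → Measurable (X t) := fun t ht =>
    measurable_const.indicator (hH ht)
  have hXsmH : ∀ t : Set 𝓗, MeasurableSet t → StronglyMeasurable[(MeasurableSpace.comap H inferInstance)] (X t) := fun t ht =>
    stronglyMeasurable_const.indicator ⟨t, ht, rfl⟩
  have hXint : ∀ t : Set 𝓗, MeasurableSet t → Integrable (X t) μ := fun t ht =>
    (integrable_const (1:ℝ)).indicator (hH ht)
  have hXbd : ∀ t (ω : Ω), |X t ω| ≤ 1 := fun t ω => by simp only [hXdef]; exact indicator_one_abs_le _ _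
  -- Key lemma: E[D * 1_{H∈t} | σ(π)] = π * E[1_{H∈t} | σ(π)] a.e.
  have key : ∀ t : Set 𝓗, MeasurableSet t →
      μ[fun ω => D ω * X t ω | (MeasurableSpace.comap π inferInstance)] =ᵐ[μ] fun ω => π ω * (μ[X t | (MeasurableSpace.comap π inferInstance)]) ω := by
    intro t ht
    have hDXint : Integrable (fun ω => D ω * X t ω) μ :=
      (integrable_const (1:ℝ)).mono' ((hD.mul (hXmeas t ht)).aestronglyMeasurable)
        (ae_of_all _ fun ω => by
          have := mul_le_mul (hDbd ω) (hXbd t ω) (abs_nonneg _) (by norm_num)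
          simpa [Real.norm_eq_abs, abs_mul] using this)
    have hπXint : Integrable (fun ω => π ω * X t ω) μ :=
      hπint.abs.mono' ((hπmeas.mul (hXmeas t ht)).aestronglyMeasurable)
        (ae_of_all _ fun ω => by
          have : |π ω * X t ω| ≤ |π ω| * 1 :=
            (abs_mul _ _).le.trans (mul_le_mul_of_nonneg_left (hXbd t ω) (abs_nonneg _))
          simpa [Real.norm_eq_abs, Pi.abs_apply, abs_mul] using this)
    -- step 1: pull π out
    have step1 : μ[fun ω => π ω * X t ω | (MeasurableSpace.comap π inferInstance)] =ᵐ[μ] fun ω => π ω * (μ[X t | (MeasurableSpace.comap π inferInstance)]) ω := by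
      have := condExp_mul_of_stronglyMeasurable_left (μ := μ) hπsm
        (by simpa [Pi.mul_def] using hπXint) (hXint t ht)
      simpa [Pi.mul_def] using this
    -- step 2: E[(π - D) * X t | σ(π)] = 0
    have hZint : Integrable (fun ω => (π ω - D ω) * X t ω) μ := by
      have : (fun ω => (π ω - D ω) * X t ω)
          = fun ω => π ω * X t ω - D ω * X t ω := by funext ω; ring
      rw [this]; exact hπXint.sub hDXint
    have step2 : μ[fun ω => (π ω - D ω) * X t ω | (MeasurableSpace.comap π inferInstance)] =ᵐ[μ] (fun _ => (0:ℝ)) := by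
      refine (ae_eq_condExp_of_forall_setIntegral_eq (g := fun _ => (0:ℝ)) hmπ_le hZint
        (fun s _ _ => (integrable_zero _ _ _).integrableOn)
        (fun s hs hμs => ?_)
        (stronglyMeasurable_const.aestronglyMeasurable)).symm
      obtain ⟨S, hS, rfl⟩ := hs
      rw [integral_zero]
      set ψ : ℝ → ℝ := S.indicator (fun _ => (1:ℝ)) with hψdef
      have hψmeas : Measurable ψ := measurable_const.indicator hS
      have hψbd : ∀ y, |ψ y| ≤ 1 := fun y => by simp only [hψdef]; exact indicator_one_abs_le _ _
      -- rewrite set integral as full integral against indicator of the set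
      have hind : (π ⁻¹' S).indicator (fun ω => (π ω - D ω) * X t ω)
          = fun ω => ψ (π ω) * ((π ω - D ω) * X t ω) := by
        funext ω
        by_cases hω : π ω ∈ S <;>
          simp [Set.indicator_apply, hω, hψdef]
      have h1 : ∫ ω in π ⁻¹' S, (π ω - D ω) * X t ω ∂μ
          = ∫ ω, ψ (π ω) * ((π ω - D ω) * X t ω) ∂μ := by
        rw [← integral_indicator (hπmeas hS), hind]
      rw [h1]
      -- replace π by π' a.e.
      have h2 : (fun ω => ψ (π ω) * ((π ω - D ω) * X t ω))
          =ᵐ[μ] fun ω => ψ (π' ω) * ((π' ω - D ω) * X t ω) := by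
        filter_upwards [hπ] with ω hω
        rw [hω]
      rw [integral_congr_ae h2]
      -- now pull out the (MeasurableSpace.comap H inferInstance)-measurable factor
      set φ : Ω → ℝ := fun ω => ψ (π' ω) * X t ω with hφdef
      have hφsm : StronglyMeasurable[(MeasurableSpace.comap H inferInstance)] φ :=
        ((hψmeas.comp hπ'sm.measurable).stronglyMeasurable.mul (hXsmH t ht))
      have hφbd : ∀ ω, |φ ω| ≤ 1 := fun ω => by
        have := mul_le_mul (hψbd (π' ω)) (hXbd t ω) (abs_nonneg _) (by norm_num)
        simpa [hφdef, abs_mul] using this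
      have hφmeas : Measurable φ := (hφsm.measurable.mono hmH_le le_rfl)
      have hφDint : Integrable (fun ω => φ ω * D ω) μ :=
        (integrable_const (1:ℝ)).mono' ((hφmeas.mul hD).aestronglyMeasurable)
          (ae_of_all _ fun ω => by
            have := mul_le_mul (hφbd ω) (hDbd ω) (abs_nonneg _) (by norm_num)
            simpa [Real.norm_eq_abs, abs_mul] using this)
      have hφπ'int : Integrable (fun ω => φ ω * π' ω) μ :=
        hπ'int.abs.mono' ((hφmeas.mul (hπ'sm.measurable.mono hmH_le le_rfl)).aestronglyMeasurable)
          (ae_of_all _ fun ω => by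
            have : |φ ω * π' ω| ≤ 1 * |π' ω| :=
              (abs_mul _ _).le.trans (mul_le_mul_of_nonneg_right (hφbd ω) (abs_nonneg _))
            simpa [Real.norm_eq_abs, Pi.abs_apply, abs_mul] using this)
      have hpull : μ[fun ω => φ ω * D ω | (MeasurableSpace.comap H inferInstance)] =ᵐ[μ] fun ω => φ ω * π' ω := by
        have := condExp_mul_of_stronglyMeasurable_left (μ := μ) hφsm
          (by simpa [Pi.mul_def] using hφDint) hDint
        simpa [Pi.mul_def, hπ'def] using this
      have h3 : ∫ ω, φ ω * π' ω ∂μ = ∫ ω, φ ω * D ω ∂μ := by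
        rw [← integral_congr_ae hpull, integral_condExp hmH_le]
      have h4 : (fun ω => ψ (π' ω) * ((π' ω - D ω) * X t ω))
          = fun ω => φ ω * π' ω - φ ω * D ω := by
        funext ω; simp only [hφdef]; ring
      rw [h4, integral_sub hφπ'int hφDint, h3, sub_self]
    -- combine: π * X t = D * X t + (π - D) * X t
    have hsplit : (fun ω => π ω * X t ω)
        = (fun ω => D ω * X t ω) + fun ω => (π ω - D ω) * X t ω := by
      funext ω; simp; ring
    calc μ[fun ω => D ω * X t ω | (MeasurableSpace.comap π inferInstance)]
        =ᵐ[μ] μ[fun ω => D ω * X t ω | (MeasurableSpace.comap π inferInstance)] + μ[fun ω => (π ω - D ω) * X t ω | (MeasurableSpace.comap π inferInstance)] := by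
          filter_upwards [step2] with ω hω
          simp [hω]
      _ =ᵐ[μ] μ[fun ω => π ω * X t ω | (MeasurableSpace.comap π inferInstance)] := by
          rw [hsplit]
          exact (condExp_add hDXint hZint _).symm
      _ =ᵐ[μ] fun ω => π ω * (μ[X t | (MeasurableSpace.comap π inferInstance)]) ω := step1
  -- E[D | σ(π)] = π a.e.
  have hDπ : μ[D | (MeasurableSpace.comap π inferInstance)] =ᵐ[μ] π := by
    have hXuniv : X Set.univ = fun _ => (1:ℝ) := by
      funext ω; simp [hXdef]
    have h := key Set.univ MeasurableSet.univ
    rw [hXuniv] at h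
    have hc : μ[(fun _ => (1:ℝ)) | (MeasurableSpace.comap π inferInstance)] = fun _ => (1:ℝ) := condExp_const hmπ_le 1
    have h' : μ[D | (MeasurableSpace.comap π inferInstance)] =ᵐ[μ] fun ω => π ω * (μ[(fun _ => (1:ℝ)) | (MeasurableSpace.comap π inferInstance)]) ω := by
      simpa using h
    rw [hc] at h'
    simpa using h'
  -- main argument
  rw [condIndepFun_iff_condExp_inter_preimage_eq_mul hD hH]
  intro s t hs ht
  set a : ℝ := if (0:ℝ) ∈ s then 1 else 0 with hadef
  set b : ℝ := if (1:ℝ) ∈ s then 1 else 0 with hbdef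
  have hDind : (D ⁻¹' s).indicator (fun _ => (1:ℝ)) = fun ω => a + (b - a) * D ω := by
    funext ω
    rcases hDval ω with h | h <;>
      by_cases h0 : (0:ℝ) ∈ s <;> by_cases h1 : (1:ℝ) ∈ s <;>
        simp [Set.indicator_apply, Set.mem_preimage, h, h0, h1, hadef, hbdef]
  have hinter : (D ⁻¹' s ∩ H ⁻¹' t).indicator (fun _ => (1:ℝ))
      = (fun ω => a * X t ω) + fun ω => (b - a) * (D ω * X t ω) := by
    funext ω
    simp only [Pi.add_apply]
    by_cases hωH : ω ∈ H ⁻¹' t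
    · have h1 : (D ⁻¹' s ∩ H ⁻¹' t).indicator (fun _ => (1:ℝ)) ω
          = (D ⁻¹' s).indicator (fun _ => (1:ℝ)) ω := by
        by_cases hωD : ω ∈ D ⁻¹' s <;> simp [Set.indicator_apply, hωD, hωH]
      have h2 := congrFun hDind ω
      have h3 : X t ω = 1 := by simp [hXdef, Set.indicator_apply, hωH]
      rw [h1, h2, h3]; ring
    · have h3 : X t ω = 0 := by simp [hXdef, Set.indicator_apply, hωH]
      have hni : ω ∉ D ⁻¹' s ∩ H ⁻¹' t := fun h => hωH h.2
      rw [h3, Set.indicator_of_notMem hni]; ring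
  have hDXint : Integrable (fun ω => D ω * X t ω) μ :=
    (integrable_const (1:ℝ)).mono' ((hD.mul (hXmeas t ht)).aestronglyMeasurable)
      (ae_of_all _ fun ω => by
        have := mul_le_mul (hDbd ω) (hXbd t ω) (abs_nonneg _) (by norm_num)
        simpa [Real.norm_eq_abs, abs_mul] using this)
  have ha1 : Integrable (fun ω => a * X t ω) μ := (hXint t ht).const_mul a
  have ha2 : Integrable (fun ω => (b - a) * (D ω * X t ω)) μ := hDXint.const_mul _
  set E : Ω → ℝ := μ[X t | (MeasurableSpace.comap π inferInstance)] with hEdef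
  have hL : μ[(D ⁻¹' s ∩ H ⁻¹' t).indicator (fun _ => (1:ℝ)) | (MeasurableSpace.comap π inferInstance)]
      =ᵐ[μ] fun ω => a * E ω + (b - a) * (π ω * E ω) := by
    rw [hinter]
    have hadd := condExp_add (μ := μ) (m := MeasurableSpace.comap π inferInstance) ha1 ha2
    have hs1 : μ[fun ω => a * X t ω | (MeasurableSpace.comap π inferInstance)]
        =ᵐ[μ] fun ω => a * E ω := by
      have := condExp_smul (μ := μ) (m := MeasurableSpace.comap π inferInstance) a (X t)
      simpa [smul_eq_mul, hEdef, Pi.smul_apply, Pi.smul_def] using this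
    have hs2 : μ[fun ω => (b - a) * (D ω * X t ω) | (MeasurableSpace.comap π inferInstance)]
        =ᵐ[μ] fun ω => (b - a) * (π ω * E ω) := by
      have h0 := condExp_smul (μ := μ) (m := MeasurableSpace.comap π inferInstance) (b - a)
        (fun ω => D ω * X t ω)
      have h1 := key t ht
      have hfun : (fun ω => (b - a) * (D ω * X t ω))
          = (b - a) • fun ω => D ω * X t ω := rfl
      rw [hfun]
      filter_upwards [h0, h1] with ω hω0 hω1
      simp only [Pi.smul_apply, smul_eq_mul] at hω0
      rw [hω0, hω1]
    filter_upwards [hadd, hs1, hs2] with ω h0 h1 h2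
    simp only [Pi.add_apply] at h0
    rw [h0, h1, h2]
  have hR : μ[(D ⁻¹' s).indicator (fun _ => (1:ℝ)) | (MeasurableSpace.comap π inferInstance)]
      =ᵐ[μ] fun ω => a + (b - a) * π ω := by
    rw [hDind]
    have hsplit : (fun ω => a + (b - a) * D ω)
        = (fun _ => a) + fun ω => (b - a) * D ω := by funext ω; simp
    rw [hsplit]
    have hadd := condExp_add (μ := μ) (m := MeasurableSpace.comap π inferInstance)
      (integrable_const a) (hDint.const_mul (b - a))
    have hc : μ[(fun _ => a) | (MeasurableSpace.comap π inferInstance)] = fun _ => a :=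
      condExp_const hmπ_le a
    have hs2 : μ[fun ω => (b - a) * D ω | (MeasurableSpace.comap π inferInstance)]
        =ᵐ[μ] fun ω => (b - a) * π ω := by
      have h0 := condExp_smul (μ := μ) (m := MeasurableSpace.comap π inferInstance) (b - a) D
      have hfun : (fun ω => (b - a) * D ω) = (b - a) • D := rfl
      rw [hfun]
      filter_upwards [h0, hDπ] with ω hω0 hω1
      simp only [Pi.smul_apply, smul_eq_mul] at hω0
      rw [hω0, hω1]
    filter_upwards [hadd, hs2] with ω h0 h2
    simp only [Pi.add_apply, hc] at h0
    rw [h0, h2]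
  have hXt : Set.indicator (H ⁻¹' t) (fun ω => (1:ℝ)) = X t := by simp [hXdef]
  have hEt : μ[Set.indicator (H ⁻¹' t) (fun ω => (1:ℝ)) | (MeasurableSpace.comap π inferInstance)]
      = E := by rw [hXt, hEdef]
  filter_upwards [hL, hR] with ω h1 h2
  rw [h1, h2]
  ring
end

section
/- In the model H := N_H ∼ N(0,1), D := 𝟙(N_D ≥ 0.2 + 0.6·𝟙(H ≥ 0)) with N_D ∼ Uniform(0,1) independent of N_H, and Y := H − D + D·N_Y − (1−D)·N_Y with N_Y ∼ N(0,1) independent of (N_H, N_D), the interventional CDFs are F₀*(y) = Φ(y/√2) and F₁*(y) = Φ((1+y)/√2), and the iPIT residual D·F₁*(Y) + (1−D)·F₀*(Y) is uniformly distributed on (0,1). -/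
open MeasureTheory ProbabilityTheory Set

/-- The standard normal CDF `Φ`. -/
noncomputable def stdNormalCDF (x : ℝ) : ℝ := cdf (gaussianReal 0 1) x

open Real
open scoped NNReal ENNReal

attribute [local fun_prop] ProbabilityTheory.measurable_gaussianPDF

lemma ipit_conv_pdf_ptwise (u : ℝ) : ∀ x : ℝ, gaussianPDFReal 0 1 (u - x) * gaussianPDFReal 0 1 x
      = (2 * π)⁻¹ * Real.exp (-u ^ 2 / 4) * Real.exp (-(x - u / 2) ^ 2) := by
  intro x
  simp only [gaussianPDFReal, NNReal.coe_one, mul_one, sub_zero]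
  rw [mul_mul_mul_comm, ← Real.exp_add, mul_assoc ((2 * π)⁻¹), ← Real.exp_add, ← mul_inv,
    Real.mul_self_sqrt (by positivity)]
  congr 1
  ring

lemma ipit_conv_pdf (u : ℝ) :
    ∫ x, gaussianPDFReal 0 1 (u - x) * gaussianPDFReal 0 1 x
      = gaussianPDFReal 0 2 u := by
  have hsqrtπ : Real.sqrt π ≠ 0 := by positivity
  calc ∫ x, gaussianPDFReal 0 1 (u - x) * gaussianPDFReal 0 1 x
      = ∫ x, (2 * π)⁻¹ * Real.exp (-u ^ 2 / 4) * Real.exp (-(x - u / 2) ^ 2) := by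
        simp_rw [ipit_conv_pdf_ptwise u]
    _ = (2 * π)⁻¹ * Real.exp (-u ^ 2 / 4) * ∫ x, Real.exp (-(x - u / 2) ^ 2) :=
        integral_const_mul _ _
    _ = (2 * π)⁻¹ * Real.exp (-u ^ 2 / 4) * Real.sqrt π := by
        rw [integral_sub_right_eq_self (fun x => Real.exp (-x ^ 2)) (u / 2)]
        have hg := integral_gaussian 1
        simp only [one_mul, div_one, neg_mul] at hg
        rw [hg]
    _ = gaussianPDFReal 0 2 u := by
        simp only [gaussianPDFReal, sub_zero]
        push_cast
        rw [show (2 * π * 2 : ℝ) = (2 * Real.sqrt π) ^ 2 by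
          rw [mul_pow, sq_sqrt pi_nonneg]; ring]
        rw [Real.sqrt_sq (by positivity)]
        rw [show -u ^ 2 / (2 * 2) = -u ^ 2 / 4 by norm_num]
        field_simp
        ring_nf
        rw [sq_sqrt pi_nonneg]

lemma ipit_pdf_integrable (u : ℝ) :
    Integrable (fun x => gaussianPDFReal 0 1 (u - x) * gaussianPDFReal 0 1 x) := by
  simp_rw [ipit_conv_pdf_ptwise u]
  have h : Integrable (fun x : ℝ => Real.exp (-(x - u / 2) ^ 2)) := by
    have h := (integrable_exp_neg_mul_sq one_pos).comp_sub_right (u / 2)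
    simpa using h
  exact h.const_mul _

lemma ipit_inner (u : ℝ) :
    ∫⁻ x, gaussianPDF 0 1 x * gaussianPDF 0 1 (u - x) = gaussianPDF 0 2 u := by
  have h : ∀ x : ℝ, gaussianPDF 0 1 x * gaussianPDF 0 1 (u - x)
      = ENNReal.ofReal (gaussianPDFReal 0 1 (u - x) * gaussianPDFReal 0 1 x) := by
    intro x
    rw [gaussianPDF, gaussianPDF, ← ENNReal.ofReal_mul (gaussianPDFReal_nonneg 0 1 x), mul_comm]
  simp_rw [h]
  rw [← ofReal_integral_eq_lintegral_ofReal (ipit_pdf_integrable u)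
    (ae_of_all _ fun x => mul_nonneg (gaussianPDFReal_nonneg _ _ _) (gaussianPDFReal_nonneg _ _ _)),
    ipit_conv_pdf u]
  rfl

lemma ipit_trans (a x : ℝ) :
    ∫⁻ y in Iic (a - x), gaussianPDF 0 1 y = ∫⁻ u in Iic a, gaussianPDF 0 1 (u - x) := by
  rw [← lintegral_indicator measurableSet_Iic, ← lintegral_indicator measurableSet_Iic,
    ← lintegral_add_right_eq_self (fun y => (Iic (a - x)).indicator (gaussianPDF 0 1) y) (-x)]
  congr 1; funext u
  rw [show u + -x = u - x by ring]
  simp only [Set.indicator_apply, mem_Iic, sub_le_sub_iff_right]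

lemma ipit_gauss_conv :
    ((gaussianReal 0 1).prod (gaussianReal 0 1)).map (fun p : ℝ × ℝ => p.1 + p.2)
      = gaussianReal 0 2 := by
  refine Measure.ext_of_Iic _ _ (fun a => ?_)
  rw [Measure.map_apply (by fun_prop) measurableSet_Iic]
  have hset : (fun p : ℝ × ℝ => p.1 + p.2) ⁻¹' Iic a = {p : ℝ × ℝ | p.1 + p.2 ≤ a} := rfl
  rw [hset, Measure.prod_apply (measurableSet_le (by fun_prop) measurable_const)]
  have hfib : ∀ x : ℝ, (Prod.mk x ⁻¹' {p : ℝ × ℝ | p.1 + p.2 ≤ a}) = Iic (a - x) := by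
    intro x; ext y
    simp only [mem_preimage, mem_setOf_eq, mem_Iic]
    constructor <;> intro <;> linarith
  simp_rw [hfib]
  have hG : ∀ x : ℝ, gaussianReal 0 1 (Iic (a - x))
      = ∫⁻ u in Iic a, gaussianPDF 0 1 (u - x) := by
    intro x
    rw [gaussianReal_apply 0 one_ne_zero, ipit_trans a x]
  simp_rw [hG]
  rw [gaussianReal_of_var_ne_zero 0 one_ne_zero,
    lintegral_withDensity_eq_lintegral_mul _ (measurable_gaussianPDF 0 1)
      (Measurable.lintegral_prod_right (by fun_prop))]
  simp only [Pi.mul_apply]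
  have hpull : ∀ x : ℝ, gaussianPDF 0 1 x * ∫⁻ u in Iic a, gaussianPDF 0 1 (u - x)
      = ∫⁻ u in Iic a, gaussianPDF 0 1 x * gaussianPDF 0 1 (u - x) := by
    intro x
    rw [lintegral_const_mul _ (by fun_prop)]
  simp_rw [hpull]
  rw [lintegral_lintegral_swap (by fun_prop)]
  simp_rw [ipit_inner]
  rw [← gaussianReal_apply 0 (by norm_num) (Iic a)]

lemma ipit_gauss_Ioc_pos {a b : ℝ} (h : a < b) : 0 < gaussianReal 0 1 (Ioc a b) := by
  rcases eq_or_ne (gaussianReal 0 1 (Ioc a b)) 0 with h0 | h0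
  · have hv := gaussianReal_absolutelyContinuous' 0 one_ne_zero h0
    rw [Real.volume_Ioc, ENNReal.ofReal_eq_zero] at hv
    linarith
  · exact pos_iff_ne_zero.mpr h0

lemma ipit_ofReal_stdNormalCDF (x : ℝ) :
    ENNReal.ofReal (stdNormalCDF x) = gaussianReal 0 1 (Iic x) := ofReal_cdf _ x

lemma stdNormalCDF_strictMono : StrictMono stdNormalCDF := by
  intro x y hxy
  have h1 : gaussianReal 0 1 (Iic x) + gaussianReal 0 1 (Ioc x y) = gaussianReal 0 1 (Iic y) := by
    rw [← measure_union (Iic_disjoint_Ioc le_rfl) measurableSet_Ioc, Iic_union_Ioc_eq_Iic hxy.le]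
  have h3 : gaussianReal 0 1 (Iic x) < gaussianReal 0 1 (Iic y) := by
    rw [← h1]
    exact ENNReal.lt_add_right (measure_ne_top _ _) (ipit_gauss_Ioc_pos hxy).ne'
  rw [← ipit_ofReal_stdNormalCDF, ← ipit_ofReal_stdNormalCDF] at h3
  exact (ENNReal.ofReal_lt_ofReal_iff_of_nonneg (cdf_nonneg _ _)).mp h3

lemma stdNormalCDF_pos (x : ℝ) : 0 < stdNormalCDF x :=
  lt_of_le_of_lt (cdf_nonneg _ (x - 1)) (stdNormalCDF_strictMono (by linarith : x - 1 < x))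

lemma stdNormalCDF_lt_one (x : ℝ) : stdNormalCDF x < 1 := by
  have h := stdNormalCDF_strictMono (show x < x + 1 by linarith)
  have h2 : stdNormalCDF (x + 1) ≤ 1 := cdf_le_one _ _
  linarith

lemma stdNormalCDF_eq_integral (x : ℝ) :
    stdNormalCDF x = ∫ y in Iic x, gaussianPDFReal 0 1 y := by
  have h1 := ofReal_cdf (gaussianReal 0 1) x
  rw [gaussianReal_apply_eq_integral 0 one_ne_zero] at h1
  have h2 : 0 ≤ ∫ y in Iic x, gaussianPDFReal 0 1 y :=
    setIntegral_nonneg measurableSet_Iic fun y _ => gaussianPDFReal_nonneg 0 1 y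
  exact (ENNReal.ofReal_eq_ofReal_iff (cdf_nonneg _ _) h2).mp h1

lemma stdNormalCDF_continuous : Continuous stdNormalCDF := by
  have hint : ∀ a b : ℝ, IntervalIntegrable (gaussianPDFReal 0 1) volume a b :=
    fun a b => (integrable_gaussianPDFReal 0 1).intervalIntegrable
  have h := intervalIntegral.continuous_primitive hint 0
  have heq : ∀ x : ℝ, stdNormalCDF x
      = stdNormalCDF 0 + ∫ y in (0:ℝ)..x, gaussianPDFReal 0 1 y := by
    intro x
    rw [stdNormalCDF_eq_integral, stdNormalCDF_eq_integral,
      ← intervalIntegral.integral_Iic_sub_Iic ((integrable_gaussianPDFReal 0 1).integrableOn)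
        ((integrable_gaussianPDFReal 0 1).integrableOn)]
    ring
  rw [show stdNormalCDF = fun x => stdNormalCDF 0 + ∫ y in (0:ℝ)..x, gaussianPDFReal 0 1 y
    from funext heq]
  exact continuous_const.add h

lemma stdNormalCDF_surj {t : ℝ} (h0 : 0 < t) (h1 : t < 1) : ∃ c, stdNormalCDF c = t := by
  obtain ⟨a, ha⟩ := ((tendsto_cdf_atBot (gaussianReal 0 1)).eventually_lt_const h0).exists
  obtain ⟨b, hb⟩ := ((tendsto_cdf_atTop (gaussianReal 0 1)).eventually_const_lt h1).exists
  exact intermediate_value_univ a b stdNormalCDF_continuous ⟨ha.le, hb.le⟩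

lemma ipit_gauss_neg : (gaussianReal 0 1).map (fun x : ℝ => -x) = gaussianReal 0 1 := by
  rw [show (fun x : ℝ => -x) = ((-1 : ℝ) * ·) by funext x; ring, gaussianReal_map_const_mul]
  norm_num

lemma ipit_gauss_two_Iic (y : ℝ) :
    gaussianReal 0 2 (Iic y) = ENNReal.ofReal (stdNormalCDF (y / Real.sqrt 2)) := by
  have h2 : ((⟨Real.sqrt 2 ^ 2, sq_nonneg _⟩ : ℝ≥0) * 1) = (2 : ℝ≥0) := by
    ext
    simp [Real.sq_sqrt]
  have hmap : gaussianReal 0 2 = (gaussianReal 0 1).map ((Real.sqrt 2) * ·) := by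
    rw [gaussianReal_map_const_mul, mul_zero]
    congr 1
    ext
    simp [Real.sq_sqrt]
  rw [hmap, Measure.map_apply (by fun_prop) measurableSet_Iic]
  have hpre : ((Real.sqrt 2) * ·) ⁻¹' Iic y = Iic (y / Real.sqrt 2) := by
    ext x
    simp only [mem_preimage, mem_Iic]
    rw [le_div_iff₀ (by positivity : (0:ℝ) < Real.sqrt 2), mul_comm]
  rw [hpre, ipit_ofReal_stdNormalCDF]

lemma ipit_map_add_std {Ω : Type*} [MeasurableSpace Ω] (μ : Measure Ω) [IsProbabilityMeasure μ]
    {X Z : Ω → ℝ} (hX : Measurable X) (hZ : Measurable Z) (h : IndepFun X Z μ)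
    (hXl : μ.map X = gaussianReal 0 1) (hZl : μ.map Z = gaussianReal 0 1) :
    μ.map (fun ω => X ω + Z ω) = gaussianReal 0 2 := by
  have hmap : μ.map (fun ω => (X ω, Z ω)) = (gaussianReal 0 1).prod (gaussianReal 0 1) := by
    rw [(indepFun_iff_map_prod_eq_prod_map_map hX.aemeasurable hZ.aemeasurable).mp h, hXl, hZl]
  have hcomp : (fun ω => X ω + Z ω) = (fun p : ℝ × ℝ => p.1 + p.2) ∘ (fun ω => (X ω, Z ω)) := rfl
  rw [hcomp, ← Measure.map_map (by fun_prop) (hX.prodMk hZ), hmap, ipit_gauss_conv]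

/-- In the model `H ∼ N(0,1)`, `D = 𝟙(N_D ≥ 0.2 + 0.6·𝟙(H ≥ 0))` with
`N_D ∼ U(0,1)`, `Y = H − D + D·N_Y − (1−D)·N_Y` with `N_Y ∼ N(0,1)`, all
independent: the interventional CDFs are `F₀*(y) = Φ(y/√2)` and
`F₁*(y) = Φ((1+y)/√2)`, and the iPIT residual
`D·F₁*(Y) + (1−D)·F₀*(Y)` is uniform on `(0,1)`. -/
theorem ipit_uniform_example
    {Ω : Type*} [MeasurableSpace Ω] (μ : Measure Ω) [IsProbabilityMeasure μ]
    (H ND NY : Ω → ℝ) (hH : Measurable H) (hND : Measurable ND)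
    (hNY : Measurable NY)
    (hindep : iIndepFun (m := fun _ => (inferInstance : MeasurableSpace ℝ)) ![H, ND, NY] μ)
    (hHlaw : μ.map H = gaussianReal 0 1)
    (hNDlaw : μ.map ND = volume.restrict (Icc (0:ℝ) 1))
    (hNYlaw : μ.map NY = gaussianReal 0 1)
    (D : Ω → ℝ)
    (hD : ∀ ω, D ω = Set.indicator
      (Ici (0.2 + 0.6 * Set.indicator (Ici (0:ℝ)) (fun _ => (1:ℝ)) (H ω)))
      (fun _ => (1:ℝ)) (ND ω))
    (Y : Ω → ℝ)
    (hY : ∀ ω, Y ω = H ω - D ω + D ω * NY ω - (1 - D ω) * NY ω) :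
    (∀ y : ℝ, μ.map (fun ω => H ω - NY ω) (Iic y)
        = ENNReal.ofReal (stdNormalCDF (y / Real.sqrt 2))) ∧
    (∀ y : ℝ, μ.map (fun ω => H ω - 1 + NY ω) (Iic y)
        = ENNReal.ofReal (stdNormalCDF ((1 + y) / Real.sqrt 2))) ∧
    μ.map (fun ω => D ω * stdNormalCDF ((1 + Y ω) / Real.sqrt 2)
        + (1 - D ω) * stdNormalCDF (Y ω / Real.sqrt 2))
      = volume.restrict (Ioo (0:ℝ) 1) := by
  -- independence facts
  have hfm : ∀ i, Measurable (![H, ND, NY] i) := by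
    intro i; fin_cases i <;> simpa
  have h02 : IndepFun H NY μ := by
    have h := hindep.indepFun (show (0 : Fin 3) ≠ 2 by decide)
    simpa using h
  have hXNY : IndepFun (fun ω => (H ω, ND ω)) NY μ := by
    have h := hindep.indepFun_prodMk hfm 0 1 2 (by decide) (by decide)
    simpa using h
  have hNegNY : μ.map (fun ω => -NY ω) = gaussianReal 0 1 := by
    have h : (fun ω => -NY ω) = (fun x : ℝ => -x) ∘ NY := rfl
    rw [h, ← Measure.map_map measurable_neg hNY, hNYlaw, ipit_gauss_neg]
  have hsum : μ.map (fun ω => H ω + NY ω) = gaussianReal 0 2 :=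
    ipit_map_add_std μ hH hNY h02 hHlaw hNYlaw
  have hdiff : μ.map (fun ω => H ω - NY ω) = gaussianReal 0 2 := by
    have h : (fun ω => H ω - NY ω) = fun ω => H ω + (-NY ω) := by funext ω; ring
    rw [h]
    exact ipit_map_add_std μ hH hNY.neg (h02.comp measurable_id measurable_neg) hHlaw hNegNY
  have part1 : ∀ y : ℝ, μ.map (fun ω => H ω - NY ω) (Iic y)
      = ENNReal.ofReal (stdNormalCDF (y / Real.sqrt 2)) := by
    intro y; rw [hdiff, ipit_gauss_two_Iic]
  have part2 : ∀ y : ℝ, μ.map (fun ω => H ω - 1 + NY ω) (Iic y)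
      = ENNReal.ofReal (stdNormalCDF ((1 + y) / Real.sqrt 2)) := by
    have hsum1 : μ.map (fun ω => H ω - 1 + NY ω) = (gaussianReal 0 2).map (· + (-1)) := by
      have h : (fun ω => H ω - 1 + NY ω)
          = (fun x : ℝ => x + (-1)) ∘ (fun ω => H ω + NY ω) := by
        funext ω; simp only [Function.comp_apply]; ring
      rw [h, ← Measure.map_map (f := fun ω => H ω + NY ω) (by fun_prop) (hH.add hNY), hsum]
    intro y
    rw [hsum1, Measure.map_apply (by fun_prop) measurableSet_Iic]
    have hpre : (fun x : ℝ => x + (-1)) ⁻¹' Iic y = Iic (y + 1) := by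
      ext x
      simp only [mem_preimage, mem_Iic]
      constructor <;> intro <;> linarith
    rw [hpre, ipit_gauss_two_Iic,
      show (y + 1) / Real.sqrt 2 = (1 + y) / Real.sqrt 2 by rw [add_comm]]
  -- main part
  set Θ : ℝ → ℝ := fun h => 0.2 + 0.6 * (Ici (0:ℝ)).indicator (fun _ => (1:ℝ)) h with hΘdef
  have hΘm : Measurable Θ :=
    measurable_const.add ((measurable_const.indicator measurableSet_Ici).const_mul 0.6)
  have hDval1 : ∀ ω, Θ (H ω) ≤ ND ω → D ω = 1 := by
    intro ω h
    rw [hD ω]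
    exact Set.indicator_of_mem (mem_Ici.mpr h) _
  have hDval0 : ∀ ω, ¬ Θ (H ω) ≤ ND ω → D ω = 0 := by
    intro ω h
    rw [hD ω]
    exact Set.indicator_of_notMem (fun hh => h (mem_Ici.mp hh)) _
  have hAmeas : MeasurableSet {ω | Θ (H ω) ≤ ND ω} := measurableSet_le (hΘm.comp hH) hND
  have hDm : Measurable D := by
    have h : D = fun ω => if Θ (H ω) ≤ ND ω then (1:ℝ) else 0 := by
      funext ω
      rw [hD ω, Set.indicator_apply]
      simp only [Set.mem_Ici]
      rfl
    rw [h]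
    exact Measurable.ite hAmeas measurable_const measurable_const
  have hYm : Measurable Y := by
    have h : Y = fun ω => H ω - D ω + D ω * NY ω - (1 - D ω) * NY ω := funext hY
    rw [h]
    exact ((hH.sub hDm).add (hDm.mul hNY)).sub ((measurable_const.sub hDm).mul hNY)
  have hΦm : Measurable stdNormalCDF := stdNormalCDF_strictMono.monotone.measurable
  set R : Ω → ℝ := fun ω => D ω * stdNormalCDF ((1 + Y ω) / Real.sqrt 2)
      + (1 - D ω) * stdNormalCDF (Y ω / Real.sqrt 2) with hRdef
  have hRm : Measurable R :=
    (hDm.mul (hΦm.comp ((measurable_const.add hYm).div_const _))).add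
      ((measurable_const.sub hDm).mul (hΦm.comp (hYm.div_const _)))
  have hR1 : ∀ ω, Θ (H ω) ≤ ND ω → R ω = stdNormalCDF ((H ω + NY ω) / Real.sqrt 2) := by
    intro ω h
    have hd := hDval1 ω h
    rw [show R ω = D ω * stdNormalCDF ((1 + Y ω) / Real.sqrt 2)
      + (1 - D ω) * stdNormalCDF (Y ω / Real.sqrt 2) from rfl, hY ω, hd,
      show 1 + (H ω - 1 + 1 * NY ω - (1 - 1) * NY ω) = H ω + NY ω by ring]
    ring
  have hR0 : ∀ ω, ¬ Θ (H ω) ≤ ND ω → R ω = stdNormalCDF ((H ω - NY ω) / Real.sqrt 2) := by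
    intro ω h
    have hd := hDval0 ω h
    rw [show R ω = D ω * stdNormalCDF ((1 + Y ω) / Real.sqrt 2)
      + (1 - D ω) * stdNormalCDF (Y ω / Real.sqrt 2) from rfl, hY ω, hd,
      show H ω - 0 + 0 * NY ω - (1 - 0) * NY ω = H ω - NY ω by ring]
    ring
  have hRpos : ∀ ω, 0 < R ω := by
    intro ω
    by_cases h : Θ (H ω) ≤ ND ω
    · rw [hR1 ω h]; exact stdNormalCDF_pos _
    · rw [hR0 ω h]; exact stdNormalCDF_pos _
  have hRlt1 : ∀ ω, R ω < 1 := by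
    intro ω
    by_cases h : Θ (H ω) ≤ ND ω
    · rw [hR1 ω h]; exact stdNormalCDF_lt_one _
    · rw [hR0 ω h]; exact stdNormalCDF_lt_one _
  refine ⟨part1, part2, ?_⟩
  haveI : IsProbabilityMeasure (μ.map R) := Measure.isProbabilityMeasure_map hRm.aemeasurable
  refine Measure.ext_of_Iic _ _ (fun t => ?_)
  rw [Measure.map_apply hRm measurableSet_Iic, Measure.restrict_apply measurableSet_Iic,
    show R ⁻¹' Iic t = {ω | R ω ≤ t} from rfl]
  rcases le_or_gt t 0 with ht | ht
  · have h1 : {ω | R ω ≤ t} = ∅ :=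
      eq_empty_iff_forall_notMem.mpr fun ω h => (hRpos ω).not_ge (h.trans ht)
    have h2 : Iic t ∩ Ioo (0:ℝ) 1 = ∅ := by
      ext x
      simp only [mem_inter_iff, mem_Iic, mem_Ioo, mem_empty_iff_false, iff_false, not_and]
      intro h1x h2x
      linarith
    rw [h1, h2]
    simp
  rcases lt_or_ge t 1 with ht1 | ht1
  · obtain ⟨c, hc⟩ := stdNormalCDF_surj ht ht1
    have hsqrt2 : (0:ℝ) < Real.sqrt 2 := by positivity
    have hEq : {ω | R ω ≤ t} =
        ({ω | Θ (H ω) ≤ ND ω} ∩ {ω | H ω + NY ω ≤ Real.sqrt 2 * c}) ∪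
        ({ω | Θ (H ω) ≤ ND ω}ᶜ ∩ {ω | H ω - NY ω ≤ Real.sqrt 2 * c}) := by
      ext ω
      by_cases h : Θ (H ω) ≤ ND ω
      · simp only [mem_setOf_eq, mem_union, mem_inter_iff, mem_compl_iff, h, true_and,
          not_true, false_and, or_false]
        rw [hR1 ω h, ← hc, stdNormalCDF_strictMono.le_iff_le, div_le_iff₀ hsqrt2, mul_comm]
      · simp only [mem_setOf_eq, mem_union, mem_inter_iff, mem_compl_iff, h, false_and,
          not_false_eq_true, true_and, false_or]
        rw [hR0 ω h, ← hc, stdNormalCDF_strictMono.le_iff_le, div_le_iff₀ hsqrt2, mul_comm]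
    have hSp : MeasurableSet {ω | H ω + NY ω ≤ Real.sqrt 2 * c} :=
      measurableSet_le (hH.add hNY) measurable_const
    have hSm : MeasurableSet {ω | H ω - NY ω ≤ Real.sqrt 2 * c} :=
      measurableSet_le (hH.sub hNY) measurable_const
    rw [hEq, measure_union
      (Disjoint.mono inter_subset_left inter_subset_left disjoint_compl_right)
      (hAmeas.compl.inter hSm)]
    have hsym : μ ({ω | Θ (H ω) ≤ ND ω}ᶜ ∩ {ω | H ω - NY ω ≤ Real.sqrt 2 * c})
        = μ ({ω | Θ (H ω) ≤ ND ω}ᶜ ∩ {ω | H ω + NY ω ≤ Real.sqrt 2 * c}) := by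
      set T : Set ((ℝ × ℝ) × ℝ) :=
        {p | ¬ Θ p.1.1 ≤ p.1.2 ∧ p.1.1 + p.2 ≤ Real.sqrt 2 * c} with hTdef
      have hT : MeasurableSet T := by
        rw [hTdef, setOf_and]
        exact ((measurableSet_le (hΘm.comp (measurable_fst.comp measurable_fst))
            (measurable_snd.comp measurable_fst)).compl).inter
          (measurableSet_le ((measurable_fst.comp measurable_fst).add measurable_snd)
            measurable_const)
      have e1 : {ω | Θ (H ω) ≤ ND ω}ᶜ ∩ {ω | H ω - NY ω ≤ Real.sqrt 2 * c}
          = (fun ω => ((H ω, ND ω), -NY ω)) ⁻¹' T := by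
        ext ω
        simp only [hTdef, mem_inter_iff, mem_compl_iff, mem_setOf_eq, mem_preimage,
          sub_eq_add_neg]
      have e2 : {ω | Θ (H ω) ≤ ND ω}ᶜ ∩ {ω | H ω + NY ω ≤ Real.sqrt 2 * c}
          = (fun ω => ((H ω, ND ω), NY ω)) ⁻¹' T := by
        ext ω
        simp only [hTdef, mem_inter_iff, mem_compl_iff, mem_setOf_eq, mem_preimage]
      rw [e1, e2, ← Measure.map_apply (f := fun ω => ((H ω, ND ω), -NY ω)) ((hH.prodMk hND).prodMk hNY.neg) hT,
        ← Measure.map_apply ((hH.prodMk hND).prodMk hNY) hT]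
      congr 1
      have hi1 : IndepFun (fun ω => (H ω, ND ω)) (fun ω => -NY ω) μ :=
        hXNY.comp measurable_id measurable_neg
      rw [(indepFun_iff_map_prod_eq_prod_map_map (g := fun ω => -NY ω) (hH.prodMk hND).aemeasurable
          hNY.neg.aemeasurable).mp hi1,
        (indepFun_iff_map_prod_eq_prod_map_map (hH.prodMk hND).aemeasurable
          hNY.aemeasurable).mp hXNY, hNYlaw, hNegNY]
    rw [hsym, ← measure_union
      (Disjoint.mono inter_subset_left inter_subset_left disjoint_compl_right)
      (hAmeas.compl.inter hSp), ← union_inter_distrib_right, union_compl_self, univ_inter,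
      show {ω | H ω + NY ω ≤ Real.sqrt 2 * c}
        = (fun ω => H ω + NY ω) ⁻¹' Iic (Real.sqrt 2 * c) from rfl,
      ← Measure.map_apply (f := fun ω => H ω + NY ω) (hH.add hNY) measurableSet_Iic, hsum, ipit_gauss_two_Iic,
      show Real.sqrt 2 * c / Real.sqrt 2 = c by field_simp, hc]
    have h2 : Iic t ∩ Ioo (0:ℝ) 1 = Ioc 0 t := by
      ext x
      simp only [mem_inter_iff, mem_Iic, mem_Ioo, mem_Ioc]
      constructor
      · rintro ⟨hx1, hx2, _⟩; exact ⟨hx2, hx1⟩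
      · rintro ⟨hx1, hx2⟩; exact ⟨hx2, hx1, lt_of_le_of_lt hx2 ht1⟩
    rw [h2, Real.volume_Ioc, sub_zero]
  · have h1 : {ω | R ω ≤ t} = univ := by
      ext ω
      simp only [mem_setOf_eq, mem_univ, iff_true]
      exact le_trans (hRlt1 ω).le ht1
    have h2 : Iic t ∩ Ioo (0:ℝ) 1 = Ioo 0 1 :=
      inter_eq_right.mpr fun x hx => le_trans hx.2.le ht1
    rw [h1, h2, measure_univ, Real.volume_Ioo]
    norm_num
end

section
/- In the model H := N_H ∼ N(0,1), D := 𝟙(N_D ≥ H) with N_D standard logistic independent of N_H, and Y := 2DH − H, conditional rank similarity fails: F_D*(Y) is not conditionally independent of D given π(H) = expit(H). -/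
open MeasureTheory ProbabilityTheory Set
open scoped ENNReal NNReal

lemma gauss_singleton (x : ℝ) : gaussianReal 0 1 {x} = 0 :=
  gaussianReal_absolutelyContinuous 0 one_ne_zero (measure_singleton x)

lemma gauss_map_neg : (gaussianReal 0 1).map (fun x => -x) = gaussianReal 0 1 := by
  have h := gaussianReal_map_const_mul (μ := 0) (v := 1) (-1)
  have he : ((-1 : ℝ) * ·) = (fun x : ℝ => -x) := by funext x; ring
  rw [he] at h
  rw [h]
  norm_num

lemma gauss_Ioc_pos {a b : ℝ} (hab : a < b) : 0 < gaussianReal 0 1 (Ioc a b) := by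
  rw [gaussianReal_apply 0 one_ne_zero]
  by_contra h
  push_neg at h
  have h0 : ∫⁻ x in Ioc a b, gaussianPDF 0 1 x = 0 := le_antisymm h zero_le
  rw [lintegral_eq_zero_iff (measurable_gaussianPDF 0 1)] at h0
  have h1 : (volume.restrict (Ioc a b)) {x | gaussianPDF 0 1 x ≠ 0} = 0 := h0
  have hset : {x | gaussianPDF 0 1 x ≠ 0} = univ := by
    ext x; simp only [mem_setOf_eq, mem_univ, iff_true]
    exact (gaussianPDF_pos 0 one_ne_zero x).ne'
  rw [hset, Measure.restrict_apply_univ, Real.volume_Ioc] at h1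
  simp only [ENNReal.ofReal_eq_zero, sub_nonpos] at h1
  linarith

lemma gauss_compl : gaussianReal 0 1 (Iic 0) + gaussianReal 0 1 (Ioi 0) = 1 := by
  rw [← measure_union (by simp [disjoint_left]) measurableSet_Ioi, Iic_union_Ioi]
  exact measure_univ

lemma gauss_Iic_zero : gaussianReal 0 1 (Iic 0) = 1/2 := by
  have hcompl := gauss_compl
  have hIoi : gaussianReal 0 1 (Ioi 0) = gaussianReal 0 1 (Iio 0) := by
    conv_lhs => rw [← gauss_map_neg]
    rw [Measure.map_apply measurable_neg measurableSet_Ioi]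
    congr 1
    ext x
    simp
  have hIio : gaussianReal 0 1 (Iio 0) = gaussianReal 0 1 (Iic 0) := by
    have h2 : gaussianReal 0 1 (Iic 0) = gaussianReal 0 1 (Iio 0) + gaussianReal 0 1 {0} := by
      rw [← measure_union (by intro s hs hs' x hx; exact absurd (hs' hx) (ne_of_lt (hs hx)))
        (measurableSet_singleton 0)]
      congr 1; ext x; simp [le_iff_lt_or_eq]
    rw [h2, gauss_singleton, add_zero]
  rw [hIoi, hIio] at hcompl
  rw [ENNReal.eq_div_iff two_ne_zero ENNReal.ofNat_ne_top, two_mul]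
  exact hcompl

lemma gauss_Ioi_zero : gaussianReal 0 1 (Ioi 0) = 1/2 := by
  have hcompl := gauss_compl
  rw [gauss_Iic_zero] at hcompl
  have h1 : gaussianReal 0 1 (Ioi 0) = 1 - 1/2 :=
    ENNReal.eq_sub_of_add_eq (by simp) (by rw [add_comm]; exact hcompl)
  rw [h1]
  simp [ENNReal.sub_half]

lemma measurable_stdNormalCDF : Measurable stdNormalCDF :=
  (monotone_cdf (gaussianReal 0 1)).measurable

lemma gauss_Iic_ne_top (x : ℝ) : gaussianReal 0 1 (Iic x) ≠ ⊤ := measure_ne_top _ _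

lemma stdNormalCDF_gt_half {x : ℝ} (hx : 0 < x) : 1/2 < stdNormalCDF x := by
  have hsplit : gaussianReal 0 1 (Iic x) = gaussianReal 0 1 (Iic 0) + gaussianReal 0 1 (Ioc 0 x) := by
    rw [← measure_union (by intro s hs hs' y hy; exact absurd (hs hy) (not_le.mpr (hs' hy).1))
      measurableSet_Ioc]
    congr 1
    rw [Iic_union_Ioc_eq_Iic hx.le]
  have hpos := gauss_Ioc_pos hx
  rw [stdNormalCDF, cdf_eq_real, measureReal_def, hsplit, gauss_Iic_zero,
    ENNReal.toReal_add (by simp) (measure_ne_top _ _)]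
  have h2 : ((1:ℝ≥0∞)/2).toReal = 1/2 := by simp [ENNReal.toReal_div]
  rw [h2]
  have : 0 < (gaussianReal 0 1 (Ioc 0 x)).toReal :=
    ENNReal.toReal_pos hpos.ne' (measure_ne_top _ _)
  linarith

lemma stdNormalCDF_neg_lt_half {x : ℝ} (hx : 0 < x) : stdNormalCDF (-x) < 1/2 := by
  have hsplit : gaussianReal 0 1 (Iic 0) = gaussianReal 0 1 (Iic (-x)) + gaussianReal 0 1 (Ioc (-x) 0) := by
    rw [← measure_union (by intro s hs hs' y hy; exact absurd (hs hy) (not_le.mpr (hs' hy).1))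
      measurableSet_Ioc]
    congr 1
    rw [Iic_union_Ioc_eq_Iic (by linarith)]
  have hpos := gauss_Ioc_pos (show -x < 0 by linarith)
  rw [gauss_Iic_zero] at hsplit
  have := congrArg ENNReal.toReal hsplit
  rw [ENNReal.toReal_add (measure_ne_top _ _) (measure_ne_top _ _)] at this
  have h2 : ((1:ℝ≥0∞)/2).toReal = 1/2 := by simp [ENNReal.toReal_div]
  rw [h2] at this
  have hp : 0 < (gaussianReal 0 1 (Ioc (-x) 0)).toReal :=
    ENNReal.toReal_pos hpos.ne' (measure_ne_top _ _)
  rw [stdNormalCDF, cdf_eq_real, measureReal_def]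
  linarith

lemma expit_gt_half_iff (h : ℝ) : 1/2 < 1/(1+Real.exp (-h)) ↔ 0 < h := by
  have he := Real.exp_pos (-h)
  rw [div_lt_div_iff₀ (by norm_num) (by linarith)]
  rw [show (1:ℝ) * (1 + Real.exp (-h)) = 1 + Real.exp (-h) by ring, show (1:ℝ)*2 = 2 by ring]
  constructor
  · intro hlt
    have : Real.exp (-h) < 1 := by linarith
    rw [Real.exp_lt_one_iff] at this
    linarith
  · intro hh
    have : Real.exp (-h) < 1 := Real.exp_lt_one_iff.mpr (by linarith)
    linarith

lemma expit_lt_one (h : ℝ) : 1/(1+Real.exp (-h)) < 1 := by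
  have he := Real.exp_pos (-h)
  rw [div_lt_one (by linarith)]
  linarith

/-- In the model `H ∼ N(0,1)`, `D = 𝟙(N_D ≥ H)` with `N_D` standard logistic
independent of `H`, `Y = 2DH − H`, conditional rank similarity fails: the iPIT
residual `F_D*(Y) = D·Φ(Y) + (1−D)·Φ(Y)` is not conditionally independent of
`D` given `π(H) = expit(H)` (here `F₀* = F₁* = Φ`). -/
theorem crs_fails_example
    {Ω : Type*} {mΩ : MeasurableSpace Ω} [StandardBorelSpace Ω]
    (μ : Measure Ω) [IsProbabilityMeasure μ]
    (H ND : Ω → ℝ) (hH : Measurable H) (hND : Measurable ND)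
    (hHlaw : μ.map H = gaussianReal 0 1)
    (hNDlaw : ∀ x : ℝ, μ.map ND (Iic x) = ENNReal.ofReal (1 / (1 + Real.exp (-x))))
    (hindep : IndepFun H ND μ)
    (D : Ω → ℝ)
    (hD : ∀ ω, D ω = Set.indicator (Ici (H ω)) (fun _ => (1:ℝ)) (ND ω))
    (Y : Ω → ℝ) (hY : ∀ ω, Y ω = 2 * D ω * H ω - H ω)
    (R : Ω → ℝ)
    (hR : ∀ ω, R ω = D ω * stdNormalCDF (Y ω) + (1 - D ω) * stdNormalCDF (Y ω))
    (π : Ω → ℝ) (hπmeas : Measurable π)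
    (hπ : ∀ ω, π ω = 1 / (1 + Real.exp (-(H ω)))) :
    ¬ CondIndepFun (MeasurableSpace.comap π inferInstance) hπmeas.comap_le
        R D μ := by
  intro hCI
  set γ : Measure ℝ := gaussianReal 0 1 with hγ
  set ν : Measure ℝ := μ.map ND with hν
  haveI hνprob : IsProbabilityMeasure ν := Measure.isProbabilityMeasure_map hND.aemeasurable
  have hm' : MeasurableSpace.comap π inferInstance ≤ mΩ := hπmeas.comap_le
  -- the event D = 1
  set B : Set Ω := {ω | H ω ≤ ND ω} with hBdef
  have hB : MeasurableSet B := measurableSet_le hH hND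
  have hDeq : D = B.indicator (fun _ => (1:ℝ)) := by
    funext ω
    rw [hD]
    by_cases hω : ω ∈ B
    · rw [Set.indicator_of_mem hω, Set.indicator_of_mem (by exact hω)]
    · rw [Set.indicator_of_notMem hω, Set.indicator_of_notMem (by exact hω)]
  have hDmeas : Measurable D := by
    rw [hDeq]; exact measurable_const.indicator hB
  have hYmeas : Measurable Y := by
    have : Y = fun ω => 2 * D ω * H ω - H ω := funext hY
    rw [this]; fun_prop
  have hRmeas : Measurable R := by
    have : R = fun ω => D ω * stdNormalCDF (Y ω) + (1 - D ω) * stdNormalCDF (Y ω) := funext hR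
    rw [this]
    exact ((hDmeas.mul (measurable_stdNormalCDF.comp hYmeas)).add
      ((measurable_const.sub hDmeas).mul (measurable_stdNormalCDF.comp hYmeas)))
  -- events A and G
  set A : Set Ω := R ⁻¹' (Ioi (1/2)) with hAdef
  set G : Set Ω := π ⁻¹' (Ioi (1/2)) with hGdef
  have hGm' : MeasurableSet[MeasurableSpace.comap π inferInstance] G := ⟨Ioi (1/2), measurableSet_Ioi, rfl⟩
  have hGmeas : MeasurableSet G := hπmeas measurableSet_Ioi
  have hGiff : ∀ ω, ω ∈ G ↔ 0 < H ω := by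
    intro ω
    simp only [hGdef, mem_preimage, mem_Ioi, hπ ω]
    exact expit_gt_half_iff (H ω)
  have hDval : ∀ ω, (ω ∈ B → D ω = 1) ∧ (ω ∉ B → D ω = 0) := by
    intro ω
    constructor
    · intro hω; rw [hDeq, Set.indicator_of_mem hω]
    · intro hω; rw [hDeq, Set.indicator_of_notMem hω]
  have hAG : A ∩ G = B ∩ G := by
    ext ω
    simp only [mem_inter_iff, hAdef, mem_preimage, mem_Ioi, and_congr_left_iff]
    intro hωG
    have hH0 : 0 < H ω := (hGiff ω).mp hωG
    by_cases hω : ω ∈ B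
    · have hD1 : D ω = 1 := (hDval ω).1 hω
      have hYω : Y ω = H ω := by rw [hY, hD1]; ring
      have hRω : R ω = stdNormalCDF (H ω) := by rw [hR, hD1, hYω]; ring
      rw [hRω]
      simp only [hω, iff_true]
      exact stdNormalCDF_gt_half hH0
    · have hD0 : D ω = 0 := (hDval ω).2 hω
      have hYω : Y ω = -(H ω) := by rw [hY, hD0]; ring
      have hRω : R ω = stdNormalCDF (-(H ω)) := by rw [hR, hD0, hYω]; ring
      rw [hRω]
      simp only [hω, iff_false, not_lt]
      exact (stdNormalCDF_neg_lt_half hH0).le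
  have hDpre : D ⁻¹' {1} = B := by
    ext ω
    simp only [mem_preimage, mem_singleton_iff]
    constructor
    · intro h1
      by_contra hω
      rw [(hDval ω).2 hω] at h1
      norm_num at h1
    · exact (hDval ω).1
  -- the conditional independence hypothesis applied to our sets
  have hkey := (condIndepFun_iff_condExp_inter_preimage_eq_mul hRmeas hDmeas).mp hCI
    (Ioi (1/2)) {1} measurableSet_Ioi (measurableSet_singleton 1)
  rw [hDpre] at hkey
  -- conditional expectations
  set f : Ω → ℝ := μ[B.indicator (fun _ => (1:ℝ)) | MeasurableSpace.comap π inferInstance] with hfdef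
  set a : Ω → ℝ := μ[A.indicator (fun _ => (1:ℝ)) | MeasurableSpace.comap π inferInstance] with hadef
  set c : Ω → ℝ := μ[(A ∩ B).indicator (fun _ => (1:ℝ)) | MeasurableSpace.comap π inferInstance] with hcdef
  have hintB : Integrable (B.indicator (fun _ => (1:ℝ))) μ := (integrable_const 1).indicator hB
  have hintA : Integrable (A.indicator (fun _ => (1:ℝ))) μ :=
    (integrable_const 1).indicator (hRmeas measurableSet_Ioi)
  have hintAB : Integrable ((A ∩ B).indicator (fun _ => (1:ℝ))) μ :=
    (integrable_const 1).indicator ((hRmeas measurableSet_Ioi).inter hB)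
  -- a = f a.e. on G
  have hGind : G.indicator (A.indicator (fun _ => (1:ℝ))) =
      G.indicator (B.indicator (fun _ => (1:ℝ))) := by
    funext ω
    by_cases hω : ω ∈ G
    · rw [Set.indicator_of_mem hω, Set.indicator_of_mem hω]
      by_cases hA : ω ∈ A
      · have hBω : ω ∈ B := ((hAG ▸ (mem_inter hA hω)) : ω ∈ B ∩ G).1
        rw [Set.indicator_of_mem hA, Set.indicator_of_mem hBω]
      · have hBω : ω ∉ B := fun hBω => hA ((hAG.symm ▸ (mem_inter hBω hω)) : ω ∈ A ∩ G).1
        rw [Set.indicator_of_notMem hA, Set.indicator_of_notMem hBω]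
    · rw [Set.indicator_of_notMem hω, Set.indicator_of_notMem hω]
  have haf : a =ᵐ[μ.restrict G] f := by
    have h1 := condExp_indicator (m := MeasurableSpace.comap π inferInstance) (μ := μ) hintA hGm'
    have h2 := condExp_indicator (m := MeasurableSpace.comap π inferInstance) (μ := μ) hintB hGm'
    rw [hGind] at h1
    have h3 : G.indicator a =ᵐ[μ] G.indicator f := (h1.symm.trans h2 : _)
    rw [Filter.EventuallyEq, ae_restrict_iff' hGmeas]
    filter_upwards [h3] with ω hω hωG
    rwa [Set.indicator_of_mem hωG, Set.indicator_of_mem hωG] at hω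
  -- CONT
  have hc_af : c =ᵐ[μ] fun ω => a ω * f ω := hkey
  -- integral computations over G
  have hGAB : G ∩ (A ∩ B) = B ∩ G := by
    ext ω
    constructor
    · rintro ⟨hG, _, hBω⟩; exact ⟨hBω, hG⟩
    · rintro ⟨hBω, hG⟩
      exact ⟨hG, ((hAG.symm ▸ (mem_inter hBω hG)) : ω ∈ A ∩ G).1, hBω⟩
  have hInt1 : ∫ ω in G, c ω ∂μ = (μ (B ∩ G)).toReal := by
    rw [hcdef, setIntegral_condExp hm' hintAB hGm',
      setIntegral_indicator ((hRmeas measurableSet_Ioi).inter hB), hGAB, setIntegral_const]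
    simp [measureReal_def]
  have hInt2 : ∫ ω in G, c ω ∂μ = ∫ ω in G, a ω * f ω ∂μ :=
    integral_congr_ae (ae_restrict_of_ae hc_af)
  have hInt3 : ∫ ω in G, a ω * f ω ∂μ = ∫ ω in G, f ω * f ω ∂μ := by
    refine integral_congr_ae ?_
    filter_upwards [haf] with ω hω
    rw [hω]
  have hInt4 : ∫ ω in G, f ω ∂μ = (μ (B ∩ G)).toReal := by
    rw [hfdef, setIntegral_condExp hm' hintB hGm', setIntegral_indicator hB,
      inter_comm, setIntegral_const]
    simp [measureReal_def]
  -- bounds on f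
  have hf0 : 0 ≤ᵐ[μ] f :=
    condExp_nonneg (Filter.Eventually.of_forall fun ω =>
      Set.indicator_nonneg (fun _ _ => zero_le_one) ω)
  have hf1 : f ≤ᵐ[μ] fun _ => 1 := by
    have h := condExp_mono (m := MeasurableSpace.comap π inferInstance) hintB (integrable_const 1)
      (Filter.Eventually.of_forall fun ω =>
        Set.indicator_le_self' (fun _ _ => zero_le_one) ω)
    have hc := condExp_const (μ := μ) hm' (1:ℝ)
    calc f ≤ᵐ[μ] μ[(fun _ => (1:ℝ)) | MeasurableSpace.comap π inferInstance] := h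
    _ = fun _ => (1:ℝ) := hc
  have hfmeasΩ : AEStronglyMeasurable f μ :=
    (stronglyMeasurable_condExp.mono hm').aestronglyMeasurable
  have hff_int : Integrable (fun ω => f ω * f ω) μ := by
    refine Integrable.mono' (integrable_const (1:ℝ)) (hfmeasΩ.mul hfmeasΩ) ?_
    filter_upwards [hf0, hf1] with ω h0 h1
    have h0' : (0:ℝ) ≤ f ω := h0
    have h1' : f ω ≤ 1 := h1
    have : |f ω * f ω| ≤ 1 := by
      rw [abs_mul]
      have : |f ω| ≤ 1 := abs_le.mpr ⟨by linarith, h1'⟩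
      nlinarith [abs_nonneg (f ω)]
    simpa [Real.norm_eq_abs] using this
  have hzero : ∫ ω in G, (f ω - f ω * f ω) ∂μ = 0 := by
    rw [integral_sub integrable_condExp.integrableOn hff_int.integrableOn,
      hInt4, ← hInt3, ← hInt2, hInt1]
    ring
  have hnonneg : 0 ≤ᵐ[μ.restrict G] fun ω => f ω - f ω * f ω := by
    refine ae_restrict_of_ae ?_
    filter_upwards [hf0, hf1] with ω h0 h1
    have h0' : (0:ℝ) ≤ f ω := h0
    have h1' : f ω ≤ 1 := h1
    simp only [Pi.zero_apply]
    nlinarith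
  have hsq : (fun ω => f ω - f ω * f ω) =ᵐ[μ.restrict G] 0 :=
    (setIntegral_eq_zero_iff_of_nonneg_ae hnonneg
      (integrable_condExp.sub hff_int).integrableOn).mp hzero
  -- the set P = {f = 1} comes from a Borel set T through π
  have hfm' : Measurable[MeasurableSpace.comap π inferInstance] f :=
    stronglyMeasurable_condExp.measurable
  have hsetm' : MeasurableSet[MeasurableSpace.comap π inferInstance] {ω | f ω = 1} :=
    hfm' (measurableSet_singleton 1)
  obtain ⟨T, hT, hTpre⟩ := hsetm'
  set P : Set Ω := π ⁻¹' T with hPdef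
  have hPmeas : MeasurableSet P := hπmeas hT
  have hPfone : ∀ ω, ω ∈ P ↔ f ω = 1 := fun ω => by
    rw [hTpre]; exact Iff.rfl
  have hGPm' : MeasurableSet[MeasurableSpace.comap π inferInstance] (G ∩ P) :=
    ⟨Ioi (1/2) ∩ T, measurableSet_Ioi.inter hT, by rw [preimage_inter]⟩
  have hGPm'' : MeasurableSet[MeasurableSpace.comap π inferInstance] (G \ P) :=
    ⟨Ioi (1/2) \ T, measurableSet_Ioi.diff hT, by rw [preimage_diff]⟩
  -- claim 1 : B ∩ (G ∩ P) has full measure in G ∩ P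
  have claim1 : μ (B ∩ (G ∩ P)) = μ (G ∩ P) := by
    have e1 : ∫ ω in G ∩ P, f ω ∂μ = (μ (B ∩ (G ∩ P))).toReal := by
      rw [hfdef, setIntegral_condExp hm' hintB hGPm', setIntegral_indicator hB,
        inter_comm, setIntegral_const]
      simp [measureReal_def]
    have e2 : ∫ ω in G ∩ P, f ω ∂μ = (μ (G ∩ P)).toReal := by
      rw [setIntegral_congr_fun (hGmeas.inter hPmeas)
        (fun ω hω => (hPfone ω).mp hω.2 : EqOn f (fun _ => (1:ℝ)) (G ∩ P)),
        setIntegral_const]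
      simp [measureReal_def]
    exact (ENNReal.toReal_eq_toReal_iff' (measure_ne_top μ _) (measure_ne_top μ _)).mp
      (e1.symm.trans e2)
  -- claim 2 : B ∩ (G \ P) is null
  have claim2 : μ (B ∩ (G \ P)) = 0 := by
    have e1 : ∫ ω in G \ P, f ω ∂μ = (μ (B ∩ (G \ P))).toReal := by
      rw [hfdef, setIntegral_condExp hm' hintB hGPm'', setIntegral_indicator hB,
        inter_comm, setIntegral_const]
      simp [measureReal_def]
    have e2 : f =ᵐ[μ.restrict (G \ P)] 0 := by
      have hsq' : (fun ω => f ω - f ω * f ω) =ᵐ[μ.restrict (G \ P)] 0 :=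
        ae_restrict_of_ae_restrict_of_subset diff_subset hsq
      filter_upwards [hsq', ae_restrict_mem (hGmeas.diff hPmeas)] with ω hω hωmem
      have hfne : f ω ≠ 1 := fun h1 => hωmem.2 ((hPfone ω).mpr h1)
      have : f ω * (1 - f ω) = 0 := by
        have := hω
        simp only [Pi.zero_apply] at this ⊢
        nlinarith [this]
      rcases mul_eq_zero.mp this with h | h
      · simpa using h
      · exact absurd (by linarith : f ω = 1) hfne
    have e3 : ∫ ω in G \ P, f ω ∂μ = 0 := by
      rw [integral_congr_ae e2]
      simp
    rw [e3] at e1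
    exact ((ENNReal.toReal_eq_zero_iff _).mp e1.symm).resolve_right (measure_ne_top μ _)
  -- product measure computation
  have hprod : μ.map (fun ω => (H ω, ND ω)) = γ.prod ν := by
    rw [← hHlaw, hν]
    exact (indepFun_iff_map_prod_eq_prod_map_map hH.aemeasurable hND.aemeasurable).mp hindep
  have hsetle : MeasurableSet {p : ℝ × ℝ | p.1 ≤ p.2} :=
    measurableSet_le measurable_fst measurable_snd
  have keyA : ∀ S : Set ℝ, MeasurableSet S →
      μ (B ∩ H ⁻¹' S) = ∫⁻ h in S, ν (Ici h) ∂γ := by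
    intro S hS
    have hseteq : {p : ℝ × ℝ | p.1 ∈ S ∧ p.1 ≤ p.2} = (Prod.fst ⁻¹' S) ∩ {p | p.1 ≤ p.2} := rfl
    have hset : MeasurableSet {p : ℝ × ℝ | p.1 ∈ S ∧ p.1 ≤ p.2} := by
      rw [hseteq]; exact (measurable_fst hS).inter hsetle
    have hpre : B ∩ H ⁻¹' S = (fun ω => (H ω, ND ω)) ⁻¹' {p | p.1 ∈ S ∧ p.1 ≤ p.2} := by
      ext ω
      simp only [mem_inter_iff, mem_preimage, mem_setOf_eq, hBdef]
      tauto
    rw [hpre, ← Measure.map_apply (hH.prodMk hND) hset, hprod, Measure.prod_apply hset]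
    have hfun : (fun h => ν (Prod.mk h ⁻¹' {p : ℝ × ℝ | p.1 ∈ S ∧ p.1 ≤ p.2})) =
        S.indicator (fun h => ν (Ici h)) := by
      funext h
      by_cases hh : h ∈ S
      · rw [Set.indicator_of_mem hh]
        congr 1
        ext n; simp [hh, mem_Ici]
      · rw [Set.indicator_of_notMem hh]
        have : Prod.mk h ⁻¹' {p : ℝ × ℝ | p.1 ∈ S ∧ p.1 ≤ p.2} = ∅ := by
          ext n; simp [hh]
        rw [this]; simp
    rw [hfun, lintegral_indicator hS]
  -- facts about ν
  have hνcompl : ∀ x : ℝ, ν (Iic x) + ν (Ioi x) = 1 := by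
    intro x
    rw [← measure_union (by simp [disjoint_left]) measurableSet_Ioi, Iic_union_Ioi]
    exact measure_univ
  have hνIoi : ∀ x : ℝ, ν (Ioi x) = 1 - ENNReal.ofReal (1/(1+Real.exp (-x))) := by
    intro x
    refine ENNReal.eq_sub_of_add_eq (by simp) ?_
    rw [← hNDlaw x, add_comm]
    exact hνcompl x
  have hνIoi0 : ν (Ioi 0) = ENNReal.ofReal (1/2) := by
    rw [hνIoi 0, neg_zero, Real.exp_zero]
    norm_num
    rw [← ENNReal.ofReal_one, ← ENNReal.ofReal_sub _ (by norm_num : (0:ℝ) ≤ 1/2)]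
    norm_num
  have hb1 : ∀ h : ℝ, 0 < h → ν (Ici h) ≤ ENNReal.ofReal (1/2) := by
    intro h hh
    rw [← hνIoi0]
    exact measure_mono (fun x hx => lt_of_lt_of_le hh hx)
  have hb2 : ∀ h : ℝ, 0 < ν (Ici h) := by
    intro h
    refine lt_of_lt_of_le ?_ (measure_mono Ioi_subset_Ici_self)
    rw [hνIoi h]
    refine tsub_pos_iff_lt.mpr ?_
    exact ENNReal.ofReal_lt_one.mpr (expit_lt_one h)
  -- the sets S₁ and S₂
  have hemeas : Measurable (fun x : ℝ => 1/(1+Real.exp (-x))) := by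
    refine Measurable.div measurable_const ?_
    exact measurable_const.add (Real.measurable_exp.comp measurable_neg)
  set S₁ : Set ℝ := (fun x : ℝ => 1/(1+Real.exp (-x))) ⁻¹' T ∩ Ioi 0 with hS₁def
  have hS₁meas : MeasurableSet S₁ := (hemeas hT).inter measurableSet_Ioi
  have hHIoi : H ⁻¹' (Ioi 0) = G := by
    ext ω; rw [mem_preimage, mem_Ioi, ← hGiff ω]
  have hHS₁ : H ⁻¹' S₁ = G ∩ P := by
    rw [hS₁def, preimage_inter, hHIoi, hPdef]
    rw [inter_comm]
    congr 1
    ext ω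
    simp only [mem_preimage, hπ ω]
  -- conclusion for S₁
  have hγS₁map : γ S₁ = μ (H ⁻¹' S₁) := by
    rw [← hHlaw]
    exact Measure.map_apply hH hS₁meas
  have hγS₁ : γ S₁ = 0 := by
    have h1 : γ S₁ = ∫⁻ h in S₁, ν (Ici h) ∂γ := by
      rw [← keyA S₁ hS₁meas, hHS₁, claim1, ← hHS₁, ← hγS₁map]
    have h2 : ∫⁻ h in S₁, ν (Ici h) ∂γ ≤ ENNReal.ofReal (1/2) * γ S₁ := by
      calc ∫⁻ h in S₁, ν (Ici h) ∂γ ≤ ∫⁻ _ in S₁, ENNReal.ofReal (1/2) ∂γ :=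
            setLIntegral_mono' hS₁meas (fun h hh => hb1 h hh.2)
        _ = ENNReal.ofReal (1/2) * γ S₁ := by rw [setLIntegral_const]
    have hle : γ S₁ ≤ ENNReal.ofReal (1/2) * γ S₁ := h1.le.trans h2
    have hne : ENNReal.ofReal (1/2) * γ S₁ ≠ ⊤ :=
      ENNReal.mul_ne_top ENNReal.ofReal_ne_top (measure_ne_top _ _)
    have htr := ENNReal.toReal_mono hne hle
    rw [ENNReal.toReal_mul, ENNReal.toReal_ofReal (by norm_num : (0:ℝ) ≤ 1/2)] at htr
    have h0 : (γ S₁).toReal = 0 := by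
      have := ENNReal.toReal_nonneg (a := γ S₁)
      linarith
    exact ((ENNReal.toReal_eq_zero_iff _).mp h0).resolve_right (measure_ne_top _ _)
  -- conclusion for S₂
  set S₂ : Set ℝ := Ioi 0 \ S₁ with hS₂def
  have hS₂meas : MeasurableSet S₂ := measurableSet_Ioi.diff hS₁meas
  have hHS₂ : H ⁻¹' S₂ = G \ P := by
    rw [hS₂def, preimage_diff, hHIoi, hHS₁, diff_self_inter]
  have hγS₂ : γ S₂ = 0 := by
    have h1 : ∫⁻ h in S₂, ν (Ici h) ∂γ = 0 := by
      rw [← keyA S₂ hS₂meas, hHS₂]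
      exact claim2
    have hgmeas : Measurable (fun h : ℝ => ν (Ici h)) := by
      have := measurable_measure_prodMk_left (ν := ν) hsetle
      have heq : (fun h : ℝ => ν (Prod.mk h ⁻¹' {p : ℝ × ℝ | p.1 ≤ p.2})) =
          fun h : ℝ => ν (Ici h) := by
        funext h; rfl
      rwa [heq] at this
    have h2 := (lintegral_eq_zero_iff hgmeas).mp h1
    rw [Filter.EventuallyEq, ae_iff] at h2
    have hset : {h : ℝ | ¬ (fun h : ℝ => ν (Ici h)) h = (0 : ℝ → ℝ≥0∞) h} = univ := by
      ext h
      simp only [mem_setOf_eq, mem_univ, iff_true, Pi.zero_apply]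
      exact (hb2 h).ne'
    rw [hset, Measure.restrict_apply_univ] at h2
    exact h2
  -- final contradiction
  have hsub : Ioi (0:ℝ) ⊆ S₁ ∪ S₂ := by
    intro x hx
    by_cases hxS : x ∈ S₁
    · exact Or.inl hxS
    · exact Or.inr ⟨hx, hxS⟩
  have : γ (Ioi 0) = 0 := by
    refine le_antisymm ?_ zero_le
    calc γ (Ioi 0) ≤ γ (S₁ ∪ S₂) := measure_mono hsub
      _ ≤ γ S₁ + γ S₂ := measure_union_le _ _
      _ = 0 := by rw [hγS₁, hγS₂, add_zero]
  rw [hγ, gauss_Ioi_zero] at this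
  simp at this
end
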